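/- Let k be an algebraically closed field of characteristic ≠ 2, and f = f₁⋯fₙ a square-free product of n ≥ 3 linear forms fᵢ = aᵢx + bᵢy in k[x,y]. Then T = k[x,y,z]/(z² − f) is an integral domain that is a free k[x,y]-module of rank 2 and is integrally closed in its field of fractions. -/

import Mathlib

section Aux
set_option linter.unusedSectionVars false

variable {R : Type} [CommRing R] [IsDomain R] [UniqueFactorizationMonoid R]

lemma aux_not_sq {f : R} (hsf : Squarefree f) (hu : ¬ IsUnit f) : ∀ c : R, c * c ≠ f := by
  intro c hc
  exact hu (hc ▸ IsUnit.mul (hsf c (hc ▸ dvd_rfl)) (hsf c (hc ▸ dvd_rfl)))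

lemma aux_not_sq_frac (K : Type*) [Field K] [Algebra R K] [IsFractionRing R K]
    {f : R} (hsf : Squarefree f) (hu : ¬ IsUnit f) :
    ∀ c : K, c ^ 2 ≠ algebraMap R K f := by
  intro c hc
  have hint : IsIntegral R c :=
    ⟨Polynomial.X ^ 2 - Polynomial.C f, Polynomial.monic_X_pow_sub_C f two_ne_zero, by
      simp [hc]⟩
  obtain ⟨y, hy⟩ := IsIntegrallyClosed.isIntegral_iff.mp hint
  apply aux_not_sq hsf hu y
  apply IsFractionRing.injective R K
  rw [map_mul, hy, ← sq, hc]

lemma aux_den {f c d s : R} (hsf : Squarefree f) (hrel : IsRelPrime c d) (hd0 : d ≠ 0)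
    (h : c * c * f = s * (d * d)) : IsUnit d := by
  by_contra hd
  obtain ⟨p, hpi, hpd⟩ := WfDvdMonoid.exists_irreducible_factor hd hd0
  have hp : Prime p := UniqueFactorizationMonoid.irreducible_iff_prime.mp hpi
  have hpc : ¬ p ∣ c := fun hpc => hp.not_unit (hrel hpc hpd)
  have hpf : p ∣ f := by
    have : p ∣ c * c * f := h ▸ Dvd.dvd.mul_left (hpd.trans (dvd_mul_left d d)) s
    rcases (hp.dvd_mul.mp this) with h' | h'
    · rcases hp.dvd_mul.mp h' with h'' | h'' <;> exact absurd h'' hpc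
    · exact h'
  obtain ⟨f1, rfl⟩ := hpf
  have hpp : p * p ∣ c * c * (p * f1) := h ▸ (mul_dvd_mul hpd hpd).mul_left s
  have : p ∣ c * c * f1 := by
    rcases hpp with ⟨e, he⟩
    refine ⟨e, mul_left_cancel₀ hp.ne_zero ?_⟩
    calc p * (c * c * f1) = c * c * (p * f1) := by ring
    _ = p * p * e := he
    _ = p * (p * e) := by ring
  have hpf1 : p ∣ f1 := by
    rcases hp.dvd_mul.mp this with h' | h'
    · rcases hp.dvd_mul.mp h' with h'' | h'' <;> exact absurd h'' hpc
    · exact h'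
  exact hp.not_unit (hsf p (mul_dvd_mul_left p hpf1))

lemma aux_mem (K : Type*) [Field K] [Algebra R K] [IsFractionRing R K] {f : R}
    (hsf : Squarefree f) {q : K} {s : R}
    (h : algebraMap R K s = q ^ 2 * algebraMap R K f) :
    ∃ r : R, algebraMap R K r = q := by
  obtain ⟨c, d, hrel, rfl⟩ := IsFractionRing.exists_reduced_fraction R q
  have hd0 : (d : R) ≠ 0 := nonZeroDivisors.coe_ne_zero d
  have hspec : IsLocalization.mk' K c d * algebraMap R K (d : R) = algebraMap R K c :=
    IsLocalization.mk'_spec K c d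
  have key : c * c * f = s * ((d : R) * (d : R)) := by
    apply IsFractionRing.injective R K
    rw [map_mul, map_mul, map_mul, h, map_mul, ← hspec]
    ring
  have hdu := aux_den hsf hrel hd0 key
  obtain ⟨ud, hud⟩ := hdu
  refine ⟨c * (↑ud⁻¹ : R), ?_⟩
  rw [map_mul, ← hspec, mul_assoc, ← map_mul]
  have : (d : R) * (↑ud⁻¹ : R) = 1 := by
    rw [← hud]; exact ud.mul_inv
  rw [this, map_one, mul_one]

set_option maxHeartbeats 1000000 in
open Polynomial in
theorem aux_main (R : Type) [CommRing R] [IsDomain R] [UniqueFactorizationMonoid R]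
    (f : R) (hsf : Squarefree f) (hu : ¬IsUnit f) (h2 : IsUnit (2 : R)) :
    IsDomain (AdjoinRoot (X ^ 2 - C f : R[X])) ∧
      IsIntegrallyClosed (AdjoinRoot (X ^ 2 - C f : R[X])) ∧
      Module.Free R (AdjoinRoot (X ^ 2 - C f : R[X])) ∧
      Module.finrank R (AdjoinRoot (X ^ 2 - C f : R[X])) = 2 := by
  set g : R[X] := X ^ 2 - C f with hgdef
  have hgm : g.Monic := monic_X_pow_sub_C f two_ne_zero
  have hnd : g.natDegree = 2 := natDegree_X_pow_sub_C
  set K := FractionRing R with hKdef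
  have hnotsq := aux_not_sq_frac K hsf hu
  have hgirr : Irreducible g := by
    rw [hgm.irreducible_iff_irreducible_map_fraction_map (K := K)]
    have hmap : g.map (algebraMap R K) = X ^ 2 - C (algebraMap R K f) := by
      simp [hgdef]
    rw [hmap]
    exact X_pow_sub_C_irreducible_of_prime Nat.prime_two hnotsq
  have hgprime : Prime g := UniqueFactorizationMonoid.irreducible_iff_prime.mp hgirr
  haveI hdom : IsDomain (AdjoinRoot g) := AdjoinRoot.isDomain_of_prime hgprime
  set T := AdjoinRoot g with hTdef
  let pb : PowerBasis R T := AdjoinRoot.powerBasis' hgm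
  haveI hfree : Module.Free R T := Module.Free.of_basis pb.basis
  haveI hfin : Module.Finite R T := Module.Finite.of_basis pb.basis
  have hrank : Module.finrank R T = 2 := by
    rw [pb.finrank]
    simpa [pb] using hnd
  refine ⟨hdom, ?_, hfree, hrank⟩
  have hRT : Function.Injective (algebraMap R T) := by
    have hpos : 0 < pb.dim := by simp [pb, hnd]
    refine (injective_iff_map_eq_zero _).mpr ?_
    intro r hr
    have h1 : algebraMap R T r = r • pb.basis ⟨0, hpos⟩ := by
      rw [pb.basis_eq_pow, pow_zero, Algebra.algebraMap_eq_smul_one]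
    rw [h1] at hr
    have h2' : (pb.basis.repr (r • pb.basis ⟨0, hpos⟩)) ⟨0, hpos⟩ = r := by
      simp only [map_smul, Module.Basis.repr_self, Finsupp.smul_single, smul_eq_mul, mul_one,
        Finsupp.single_eq_same]
    rw [hr] at h2'
    simpa using h2'.symm
  set L := FractionRing T with hLdef
  have hTL : Function.Injective (algebraMap T L) := IsFractionRing.injective T L
  have hRL : Function.Injective (algebraMap R L) := by
    rw [IsScalarTower.algebraMap_eq R T L]
    exact hTL.comp hRT
  haveI : FaithfulSMul R L := by
    exact (faithfulSMul_iff_algebraMap_injective R L).mpr hRL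
  letI : Algebra K L := by exact FractionRing.liftAlgebra R L
  haveI : IsScalarTower R K L := by exact FractionRing.isScalarTower_liftAlgebra R L
  have hψRK : ∀ r : R, algebraMap K L (algebraMap R K r) = algebraMap R L r :=
    fun r => (IsScalarTower.algebraMap_apply R K L r).symm
  have hψinj : Function.Injective (algebraMap K L) := (algebraMap K L).injective
  set θ : L := algebraMap T L (AdjoinRoot.root g) with hθdef
  have hroot2 : (AdjoinRoot.root g) ^ 2 = algebraMap R T f := by
    have h := AdjoinRoot.mk_self (f := g)
    rw [hgdef] at h
    rw [map_sub, map_pow, AdjoinRoot.mk_X, AdjoinRoot.mk_C, sub_eq_zero] at h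
    rw [h, AdjoinRoot.algebraMap_eq]
  have hθ2 : θ ^ 2 = algebraMap R L f := by
    rw [hθdef, ← map_pow, hroot2, ← IsScalarTower.algebraMap_apply]
  have hθnot : ∀ c : K, algebraMap K L c ≠ θ := by
    intro c hc
    exact hnotsq c (hψinj (by rw [map_pow, hc, hθ2, hψRK]))
  have reprT : ∀ t : T, ∃ u v : R,
      t = algebraMap R T u + algebraMap R T v * AdjoinRoot.root g := by
    intro t
    obtain ⟨p, rfl⟩ := AdjoinRoot.mk_surjective t
    refine ⟨(p %ₘ g).coeff 0, (p %ₘ g).coeff 1, ?_⟩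
    have hmod : AdjoinRoot.mk g p = AdjoinRoot.mk g (p %ₘ g) := by
      conv_lhs => rw [← modByMonic_add_div p g]
      rw [map_add, map_mul, AdjoinRoot.mk_self, zero_mul, add_zero]
    have hg1 : g ≠ 1 := by
      intro h
      rw [h] at hnd
      simp at hnd
    have hdeg : (p %ₘ g).natDegree ≤ 1 := by
      have := natDegree_modByMonic_lt p hgm hg1
      omega
    rw [hmod]
    conv_lhs => rw [eq_X_add_C_of_natDegree_le_one hdeg]
    show AdjoinRoot.mk g _ = AdjoinRoot.mk g (C ((p %ₘ g).coeff 0)) +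
      AdjoinRoot.mk g (C ((p %ₘ g).coeff 1)) * AdjoinRoot.mk g X
    rw [← map_mul, ← map_add]
    exact congrArg _ (by ring)
  have reprL : ∀ x : L, ∃ p q : K, x = algebraMap K L p + algebraMap K L q * θ := by
    intro x
    obtain ⟨t, s, hsmem, hx⟩ := IsFractionRing.div_surjective (A := T) x
    obtain ⟨u, v, ht⟩ := reprT t
    obtain ⟨w, z, hs⟩ := reprT s
    have hsne : s ≠ 0 := nonZeroDivisors.ne_zero hsmem
    have hTt : algebraMap T L t = algebraMap R L u + algebraMap R L v * θ := by
      rw [ht, map_add, map_mul, ← IsScalarTower.algebraMap_apply,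
        ← IsScalarTower.algebraMap_apply, hθdef]
    have hTs : algebraMap T L s = algebraMap R L w + algebraMap R L z * θ := by
      rw [hs, map_add, map_mul, ← IsScalarTower.algebraMap_apply,
        ← IsScalarTower.algebraMap_apply, hθdef]
    have hsL : algebraMap T L s ≠ 0 := fun h => hsne (hTL (by rw [h, map_zero]))
    set N : R := w * w - z * z * f with hN
    have hNL : algebraMap T L s * (algebraMap R L w - algebraMap R L z * θ)
        = algebraMap R L N := by
      rw [hTs, hN]
      simp only [map_sub, map_mul]
      linear_combination (-(algebraMap R L z * algebraMap R L z)) * hθ2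
    have hNne : N ≠ 0 := by
      intro h0
      have hzero : algebraMap T L s * (algebraMap R L w - algebraMap R L z * θ) = 0 := by
        rw [hNL, h0, map_zero]
      rcases mul_eq_zero.mp hzero with h | h
      · exact hsL h
      · have hw : algebraMap R L w = algebraMap R L z * θ := sub_eq_zero.mp h
        by_cases hz : z = 0
        · rw [hz, map_zero, zero_mul] at hw
          have hw0 : w = 0 := hRL (by rw [hw, map_zero])
          apply hsne
          rw [hs, hz, hw0]
          simp
        · have hzL : algebraMap R L z ≠ 0 := fun hh => hz (hRL (by rw [hh, map_zero]))
          apply hθnot (algebraMap R K w / algebraMap R K z)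
          rw [map_div₀, hψRK, hψRK, div_eq_iff hzL, hw]
          ring
    have hNLne : algebraMap R L N ≠ 0 := fun h => hNne (hRL (by rw [h, map_zero]))
    refine ⟨algebraMap R K (u * w - v * z * f) / algebraMap R K N,
            algebraMap R K (v * w - u * z) / algebraMap R K N, ?_⟩
    have key : algebraMap T L t * algebraMap R L N =
        (algebraMap R L (u * w - v * z * f) + algebraMap R L (v * w - u * z) * θ) *
          algebraMap T L s := by
      rw [hTt, hTs, hN]
      simp only [map_sub, map_mul]
      linear_combination ((algebraMap R L u * algebraMap R L z -
        algebraMap R L v * algebraMap R L w) * algebraMap R L z) * hθ2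
    rw [map_div₀, map_div₀, hψRK, hψRK, hψRK, ← hx]
    simp only [map_sub, map_mul] at key ⊢
    rw [div_eq_iff hsL, div_mul_eq_mul_div, ← add_div, div_mul_eq_mul_div,
      eq_div_iff hNLne]
    linear_combination key
  rw [isIntegrallyClosed_iff L]
  rintro x hx
  have hxR : IsIntegral R x := isIntegral_trans x hx
  obtain ⟨p, q, rfl⟩ := reprL x
  by_cases hq : q = 0
  · have hpx : algebraMap K L p + algebraMap K L q * θ = algebraMap K L p := by
      rw [hq, map_zero, zero_mul, add_zero]
    rw [hpx] at hxR ⊢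
    have hpint : IsIntegral R p := (isIntegral_algebraMap_iff hψinj).mp hxR
    obtain ⟨y, hy⟩ := IsIntegrallyClosed.isIntegral_iff.mp hpint
    exact ⟨algebraMap R T y, by
      rw [← IsScalarTower.algebraMap_apply R T L, ← hψRK y, hy]⟩
  · set x : L := algebraMap K L p + algebraMap K L q * θ with hxdef
    have hxK : IsIntegral K x := hxR.tower_top (A := K)
    have hqL : algebraMap K L q ≠ 0 := fun h => hq (hψinj (by rw [h, map_zero]))
    have hxnotin : x ∉ (algebraMap K L).range := by
      rintro ⟨c, hc⟩
      apply hθnot ((c - p) / q)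
      rw [map_div₀, map_sub, div_eq_iff hqL, hc, hxdef]
      ring
    set P : K[X] := X ^ 2 - C (2 * p) * X + C (p ^ 2 - q ^ 2 * algebraMap R K f) with hP
    have hPx : (Polynomial.aeval x) P = 0 := by
      rw [hP]
      simp only [map_add, map_sub, map_mul, map_pow, Polynomial.aeval_X, Polynomial.aeval_C,
        map_ofNat]
      rw [hxdef, hψRK]
      linear_combination ((algebraMap K L q) ^ 2) * hθ2
    have hPm : P.Monic := by
      rw [hP]
      monicity!
    have hPnd : P.natDegree = 2 := by
      rw [hP]
      compute_degree!
    have hdvd : minpoly K x ∣ P := minpoly.dvd K x hPx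
    have hdeg2 : (minpoly K x).natDegree = 2 := by
      have hge : 2 ≤ (minpoly K x).natDegree := (minpoly.two_le_natDegree_iff hxK).mpr hxnotin
      have hle : (minpoly K x).natDegree ≤ 2 :=
        hPnd ▸ Polynomial.natDegree_le_of_dvd hdvd hPm.ne_zero
      omega
    have hPeq : P = minpoly K x := by
      obtain ⟨c, hc⟩ := hdvd
      have hmm : (minpoly K x).Monic := minpoly.monic hxK
      have hc0 : c ≠ 0 := by
        rintro rfl
        rw [mul_zero] at hc
        exact hPm.ne_zero hc
      have hcd : c.natDegree = 0 := by
        have hnm := Polynomial.natDegree_mul hmm.ne_zero hc0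
        rw [← hc, hPnd, hdeg2] at hnm
        omega
      have hlc : c.leadingCoeff = 1 := by
        have hl := congrArg Polynomial.leadingCoeff hc
        rw [Polynomial.leadingCoeff_mul, hmm.leadingCoeff, one_mul, hPm.leadingCoeff] at hl
        exact hl.symm
      have hc1 : c = 1 := by
        rw [Polynomial.eq_C_of_natDegree_eq_zero hcd]
        rw [Polynomial.leadingCoeff, hcd] at hlc
        rw [hlc, map_one]
      rw [hc, hc1, mul_one]
    have hmap : minpoly K x = (minpoly R x).map (algebraMap R K) :=
      minpoly.isIntegrallyClosed_eq_field_fractions' K hxR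
    set m : R[X] := minpoly R x with hm
    have hPmap : P = m.map (algebraMap R K) := hPeq.trans hmap
    have hPc1 : P.coeff 1 = -(2 * p) := by
      rw [hP]
      simp only [Polynomial.coeff_add, Polynomial.coeff_sub, Polynomial.coeff_C_mul,
        Polynomial.coeff_X_pow, Polynomial.coeff_X_one, Polynomial.coeff_C]
      norm_num
    have hPc0 : P.coeff 0 = p ^ 2 - q ^ 2 * algebraMap R K f := by
      rw [hP]
      simp only [Polynomial.coeff_add, Polynomial.coeff_sub, Polynomial.coeff_C_mul,
        Polynomial.coeff_X_pow, Polynomial.coeff_X_zero, Polynomial.coeff_C]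
      norm_num
    have hcoeff1 : algebraMap R K (m.coeff 1) = -(2 * p) := by
      have hco := congrArg (fun h => Polynomial.coeff h 1) hPmap
      simp only [Polynomial.coeff_map] at hco
      rw [← hco, hPc1]
    have hcoeff0 : algebraMap R K (m.coeff 0) = p ^ 2 - q ^ 2 * algebraMap R K f := by
      have hco := congrArg (fun h => Polynomial.coeff h 0) hPmap
      simp only [Polynomial.coeff_map] at hco
      rw [← hco, hPc0]
    obtain ⟨u2, hu2⟩ := h2
    set pr : R := -(((u2⁻¹ : Rˣ) : R) * m.coeff 1) with hpr
    have hprK : algebraMap R K pr = p := by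
      have hinv : ((u2⁻¹ : Rˣ) : R) * (2 : R) = 1 := by
        rw [← hu2]
        exact u2.inv_mul
      have hinvK : algebraMap R K ((u2⁻¹ : Rˣ) : R) * (2 : K) = 1 := by
        rw [show (2 : K) = algebraMap R K 2 from (map_ofNat _ 2).symm, ← map_mul, hinv, map_one]
      rw [hpr, map_neg, map_mul, hcoeff1]
      calc -(algebraMap R K ((u2⁻¹ : Rˣ) : R) * -(2 * p))
          = (algebraMap R K ((u2⁻¹ : Rˣ) : R) * 2) * p := by ring
        _ = p := by rw [hinvK, one_mul]
    have hq2 : algebraMap R K (pr * pr - m.coeff 0) = q ^ 2 * algebraMap R K f := by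
      rw [map_sub, map_mul, hprK, hcoeff0]
      ring
    obtain ⟨qr, hqr⟩ := aux_mem K hsf hq2
    refine ⟨algebraMap R T pr + algebraMap R T qr * AdjoinRoot.root g, ?_⟩
    rw [map_add, map_mul, ← IsScalarTower.algebraMap_apply R T L,
      ← IsScalarTower.algebraMap_apply R T L, ← hψRK pr, ← hψRK qr, hprK, hqr, hxdef, hθdef]



end Aux

open MvPolynomial

/-- Let `k` be an algebraically closed field of characteristic ≠ 2, and
`f = f₁⋯fₙ` a square-free product of `n ≥ 3` linear forms `fᵢ = aᵢx + bᵢy` in `k[x,y]`.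
Then `T = k[x,y,z]/(z² − f)` is an integral domain that is a free `k[x,y]`-module of rank 2
and is integrally closed in its field of fractions. -/
theorem double_plane_domain_free_integrally_closed
    (k : Type) [Field k] [IsAlgClosed k] (hchar : (2 : k) ≠ 0)
    (n : ℕ) (hn : 3 ≤ n) (a b : Fin n → k)
    (f : MvPolynomial (Fin 2) k)
    (hf : f = ∏ i, (C (a i) * X 0 + C (b i) * X 1))
    (hsf : Squarefree f) :
    IsDomain (AdjoinRoot (Polynomial.X ^ 2 - Polynomial.C f)) ∧
    IsIntegrallyClosed (AdjoinRoot (Polynomial.X ^ 2 - Polynomial.C f)) ∧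
    Module.Free (MvPolynomial (Fin 2) k) (AdjoinRoot (Polynomial.X ^ 2 - Polynomial.C f)) ∧
    Module.finrank (MvPolynomial (Fin 2) k) (AdjoinRoot (Polynomial.X ^ 2 - Polynomial.C f))
      = 2 := by
  have hfu : ¬ IsUnit f := by
    intro hf'
    have hdvd : (C (a ⟨0, by omega⟩) * X 0 + C (b ⟨0, by omega⟩) * X 1) ∣ f := by
      rw [hf]
      exact Finset.dvd_prod_of_mem _ (Finset.mem_univ _)
    have hunit := isUnit_of_dvd_unit hdvd hf'
    have h0 := hunit.map constantCoeff
    simp only [map_add, map_mul, constantCoeff_C, constantCoeff_X, mul_zero, add_zero,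
      zero_add] at h0
    exact not_isUnit_zero h0
  have h2 : IsUnit (2 : MvPolynomial (Fin 2) k) := by
    have h2k : IsUnit (2 : k) := isUnit_iff_ne_zero.mpr hchar
    have := h2k.map (algebraMap k (MvPolynomial (Fin 2) k))
    rwa [map_ofNat] at this
  exact aux_main _ f hsf hfu h2
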